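/- For every c > 0 and all a, b ∈ [−c, c], (tanh(a) − tanh(b) − (1 − tanh(c)²)·(a − b))·(tanh(a) − tanh(b) − (a − b)) ≤ 0; that is, the hyperbolic tangent is incrementally sector bounded by [1 − tanh(c)², 1] on the interval [−c, c]. -/

import Mathlib

lemma tanh_hasDerivAt (x : ℝ) :
    HasDerivAt Real.tanh (1 / Real.cosh x ^ 2) x := by
  have h : HasDerivAt (fun y => Real.sinh y / Real.cosh y)
      ((Real.cosh x * Real.cosh x - Real.sinh x * Real.sinh x) / Real.cosh x ^ 2) x :=
    (Real.hasDerivAt_sinh x).div (Real.hasDerivAt_cosh x) (ne_of_gt (Real.cosh_pos x))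
  have he : (fun y => Real.sinh y / Real.cosh y) = Real.tanh := by
    funext y; rw [Real.tanh_eq_sinh_div_cosh]
  rw [he] at h
  have h2 : Real.cosh x * Real.cosh x - Real.sinh x * Real.sinh x = 1 := by
    nlinarith [Real.cosh_sq_sub_sinh_sq x]
  rwa [h2] at h

lemma aux_lt (c : ℝ) (hc : 0 < c) (a b : ℝ)
    (ha : a ∈ Set.Icc (-c) c) (hb : b ∈ Set.Icc (-c) c) (hab : b < a) :
    (Real.tanh a - Real.tanh b - (1 - Real.tanh c ^ 2) * (a - b)) *
      (Real.tanh a - Real.tanh b - (a - b)) ≤ 0 := by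
  obtain ⟨ξ, hξ, hslope⟩ := exists_hasDerivAt_eq_slope Real.tanh
    (fun x => 1 / Real.cosh x ^ 2) hab
    (fun x _ => (tanh_hasDerivAt x).continuousAt.continuousWithinAt) (fun x _ => tanh_hasDerivAt x)
  have hξc : |ξ| ≤ |c| := by
    rw [abs_le, abs_of_pos hc]
    constructor <;> nlinarith [hξ.1, hξ.2, ha.1, ha.2, hb.1, hb.2]
  have hcosh : Real.cosh ξ ≤ Real.cosh c := Real.cosh_le_cosh.mpr hξc
  have h1 : (1:ℝ) ≤ Real.cosh ξ := Real.one_le_cosh ξ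
  have hcp : (0:ℝ) < Real.cosh c := Real.cosh_pos c
  set m := 1 / Real.cosh ξ ^ 2 with hm
  have hkey : Real.tanh a - Real.tanh b = m * (a - b) := by
    have hne : a - b ≠ 0 := by linarith [hab]
    rw [hslope]
    field_simp
  have hm1 : m ≤ 1 := by
    rw [hm, div_le_one (by positivity)]
    nlinarith
  have hm2 : 1 - Real.tanh c ^ 2 ≤ m := by
    have htanh : 1 - Real.tanh c ^ 2 = 1 / Real.cosh c ^ 2 := by
      rw [Real.tanh_eq_sinh_div_cosh]
      have := Real.cosh_sq_sub_sinh_sq c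
      field_simp
      exact this
    rw [htanh, hm]
    apply div_le_div_of_nonneg_left one_pos.le (by positivity)
    nlinarith
  rw [hkey]
  nlinarith [mul_nonneg (mul_nonneg (sub_nonneg.mpr hm2) (sub_nonneg.mpr hm1)) (sq_nonneg (a - b))]

/-- `tanh` is incrementally sector bounded by `[1 - tanh(c)², 1]` on `[-c, c]`
for every `c > 0`. -/
theorem tanh_incremental_sector_bound
    (c : ℝ) (hc : 0 < c) (a b : ℝ)
    (ha : a ∈ Set.Icc (-c) c) (hb : b ∈ Set.Icc (-c) c) :
    (Real.tanh a - Real.tanh b - (1 - Real.tanh c ^ 2) * (a - b)) *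
      (Real.tanh a - Real.tanh b - (a - b)) ≤ 0 := by
  rcases lt_trichotomy a b with h | h | h
  · have := aux_lt c hc b a hb ha h
    nlinarith [this]
  · simp [h]
  · exact aux_lt c hc a b ha hb h
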